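/- arXiv:2605.29385 — 2 statements merged into one kernel-verified Lean document; each statement's English description precedes it below -/
import Mathlib

section
/- Let $\mathcal{A} \in \mathbb{R}^{N\times N}$, $\mathcal{B} \in \mathbb{R}^{N\times p}$, $\mathcal{C}_y \in \mathbb{R}^{p\times N}$, $\mathcal{C}_u \in \mathbb{R}^{p\times N}$, and suppose $\mathcal{C}_u \mathcal{B}$ is nonsingular; set $\Lambda = (\mathcal{C}_u\mathcal{B})^{-1}$. Define $\mathcal{A}_p = \mathcal{A} - \mathcal{A}\mathcal{B}\Lambda\mathcal{C}_u$, $\mathcal{B}_p = \mathcal{A}\mathcal{B}\Lambda$, $\mathcal{C}_p = \mathcal{C}_y(I - \mathcal{B}\Lambda\mathcal{C}_u)$, $\mathcal{D}_p = \mathcal{C}_y\mathcal{B}\Lambda$. Then for every $z \in \mathbb{C}$ such that $zI - \mathcal{A}$, $zI - \mathcal{A}_p$, and $\mathcal{C}_u(zI-\mathcal{A})^{-1}\mathcal{B}$ are all invertible, the identity $\big[\mathcal{C}_y(zI-\mathcal{A})^{-1}\mathcal{B}\big]\big[\mathcal{C}_u(zI-\mathcal{A})^{-1}\mathcal{B}\big]^{-1}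 = \mathcal{C}_p(zI - \mathcal{A}_p)^{-1}\mathcal{B}_p + \mathcal{D}_p$ holds. -/
open Matrix

private lemma mapMul {m n k : ℕ} (X : Matrix (Fin m) (Fin n) ℝ) (Y : Matrix (Fin n) (Fin k) ℝ) :
    (X * Y).map Complex.ofReal = X.map Complex.ofReal * Y.map Complex.ofReal :=
  Matrix.map_mul (f := Complex.ofRealHom)

private lemma mapSub {m n : ℕ} (X Y : Matrix (Fin m) (Fin n) ℝ) :
    (X - Y).map Complex.ofReal = X.map Complex.ofReal - Y.map Complex.ofReal :=
  Matrix.map_sub _ (by simp) _ _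

private lemma mapOne {n : ℕ} : (1 : Matrix (Fin n) (Fin n) ℝ).map Complex.ofReal = 1 :=
  Matrix.map_one _ (by simp) (by simp)

theorem stmt4 {N p : ℕ}
    (A : Matrix (Fin N) (Fin N) ℝ) (B : Matrix (Fin N) (Fin p) ℝ)
    (Cy Cu : Matrix (Fin p) (Fin N) ℝ)
    (hCuB : IsUnit (Cu * B)) (z : ℂ)
    (h1 : IsUnit (z • (1 : Matrix (Fin N) (Fin N) ℂ) - A.map Complex.ofReal))
    (h2 : IsUnit (z • (1 : Matrix (Fin N) (Fin N) ℂ) -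
        (A - A * B * (Cu * B)⁻¹ * Cu).map Complex.ofReal))
    (h3 : IsUnit (Cu.map Complex.ofReal *
        (z • (1 : Matrix (Fin N) (Fin N) ℂ) - A.map Complex.ofReal)⁻¹ *
        B.map Complex.ofReal)) :
    (Cy.map Complex.ofReal *
        (z • (1 : Matrix (Fin N) (Fin N) ℂ) - A.map Complex.ofReal)⁻¹ *
        B.map Complex.ofReal) *
      (Cu.map Complex.ofReal *
        (z • (1 : Matrix (Fin N) (Fin N) ℂ) - A.map Complex.ofReal)⁻¹ *
        B.map Complex.ofReal)⁻¹ =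
    (Cy * (1 - B * (Cu * B)⁻¹ * Cu)).map Complex.ofReal *
        (z • (1 : Matrix (Fin N) (Fin N) ℂ) -
          (A - A * B * (Cu * B)⁻¹ * Cu).map Complex.ofReal)⁻¹ *
        (A * B * (Cu * B)⁻¹).map Complex.ofReal +
      (Cy * B * (Cu * B)⁻¹).map Complex.ofReal := by
  rcases Nat.eq_zero_or_pos p with hp | hp
  · subst hp
    haveI : IsEmpty (Fin 0) := inferInstance
    exact Subsingleton.elim _ _
  -- notation
  set A' := A.map Complex.ofReal with hA'
  set B' := B.map Complex.ofReal with hB'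
  set Cu' := Cu.map Complex.ofReal with hCu'
  set Cy' := Cy.map Complex.ofReal with hCy'
  set M : Matrix (Fin N) (Fin N) ℂ := z • (1 : Matrix (Fin N) (Fin N) ℂ) - A' with hMdef
  -- mapped Λ
  have hCuB' : IsUnit (Cu' * B') := by
    have := hCuB.map (RingHom.mapMatrix (Complex.ofRealHom) :
      Matrix (Fin p) (Fin p) ℝ →+* Matrix (Fin p) (Fin p) ℂ)
    simp [RingHom.mapMatrix_apply, mapMul] at this
    exact this
  set L : Matrix (Fin p) (Fin p) ℂ := (Cu' * B')⁻¹ with hLdef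
  have hLmap : ((Cu * B)⁻¹).map Complex.ofReal = L := by
    symm
    apply Matrix.inv_eq_right_inv
    rw [← mapMul, ← mapMul,
      Matrix.mul_nonsing_inv _ ((Matrix.isUnit_iff_isUnit_det _).mp hCuB), mapOne]
  have hLCuB : L * (Cu' * B') = 1 :=
    Matrix.nonsing_inv_mul _ ((Matrix.isUnit_iff_isUnit_det _).mp hCuB')
  -- rewrite mapped Ap
  have hApmap : (A - A * B * (Cu * B)⁻¹ * Cu).map Complex.ofReal
      = A' - A' * B' * L * Cu' := by
    rw [mapSub, mapMul, mapMul, mapMul, hLmap]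
  set Mp : Matrix (Fin N) (Fin N) ℂ :=
    z • (1 : Matrix (Fin N) (Fin N) ℂ) - (A' - A' * B' * L * Cu') with hMpdef
  rw [hApmap] at h2 ⊢
  have hMdet : IsUnit M.det := (Matrix.isUnit_iff_isUnit_det _).mp h1
  have hMpdet : IsUnit Mp.det := (Matrix.isUnit_iff_isUnit_det _).mp h2
  set T : Matrix (Fin p) (Fin p) ℂ := Cu' * M⁻¹ * B' with hTdef
  have hTdet : IsUnit T.det := (Matrix.isUnit_iff_isUnit_det _).mp h3
  have key : A' * B' * L * Cu' * B' = A' * B' := by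
    rw [Matrix.mul_assoc (A' * B' * L), Matrix.mul_assoc (A' * B'), hLCuB, Matrix.mul_one]
  -- Mp * B' = z • B'
  have hMpB : Mp * B' = z • B' := by
    rw [hMpdef, Matrix.sub_mul, Matrix.sub_mul, Matrix.smul_mul, Matrix.one_mul, key]
    abel
  -- z ≠ 0
  have hz : z ≠ 0 := by
    intro hz0
    have hB0 : B' = 0 := by
      have h := hMpB
      rw [hz0, zero_smul] at h
      have h' := congrArg (fun X => Mp⁻¹ * X) h
      simpa [← Matrix.mul_assoc, Matrix.nonsing_inv_mul _ hMpdet, Matrix.one_mul,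
        Matrix.mul_zero] using h'
    have hdet := (Matrix.isUnit_iff_isUnit_det _).mp hCuB'
    rw [hB0, Matrix.mul_zero] at hdet
    haveI : Nonempty (Fin p) := ⟨⟨0, hp⟩⟩
    simp [Matrix.det_zero] at hdet
  have hMpiB : Mp⁻¹ * B' = z⁻¹ • B' := by
    calc Mp⁻¹ * B' = Mp⁻¹ * (z⁻¹ • (z • B')) := by
          rw [smul_smul, inv_mul_cancel₀ hz, one_smul]
      _ = z⁻¹ • (Mp⁻¹ * (z • B')) := by rw [Matrix.mul_smul]
      _ = z⁻¹ • (Mp⁻¹ * (Mp * B')) := by rw [hMpB]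
      _ = z⁻¹ • B' := by
          rw [← Matrix.mul_assoc, Matrix.nonsing_inv_mul _ hMpdet, Matrix.one_mul]
  -- resolvent identity
  have hdiff : A' * B' * L * Cu' = Mp - M := by rw [hMpdef, hMdef]; abel
  have hres : Mp⁻¹ * (A' * B' * L * Cu') * M⁻¹ = M⁻¹ - Mp⁻¹ := by
    rw [hdiff, Matrix.mul_sub, Matrix.sub_mul, Matrix.nonsing_inv_mul _ hMpdet,
      Matrix.one_mul, Matrix.mul_assoc, Matrix.mul_nonsing_inv _ hMdet, Matrix.mul_one]
  set Y : Matrix (Fin N) (Fin p) ℂ :=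
    (1 - B' * L * Cu') * Mp⁻¹ * (A' * B' * L) + B' * L with hYdef
  -- key identity : Y * T = M⁻¹ * B'
  have hYT : Y * T = M⁻¹ * B' := by
    have e1 : Y * T = (1 - B' * L * Cu') * (Mp⁻¹ * (A' * B' * L * Cu') * M⁻¹) * B'
        + B' * L * (Cu' * M⁻¹ * B') := by
      rw [hYdef, hTdef]
      simp only [Matrix.add_mul, Matrix.mul_assoc]
    have e3 : (1 - B' * L * Cu') * (Mp⁻¹ * B') = 0 := by
      rw [hMpiB, Matrix.mul_smul]
      simp only [Matrix.sub_mul, Matrix.one_mul, Matrix.mul_assoc, hLCuB, Matrix.mul_one]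
      simp
    have e2 : (1 - B' * L * Cu') * (M⁻¹ - Mp⁻¹) * B'
        = M⁻¹ * B' - B' * L * (Cu' * M⁻¹ * B') - (1 - B' * L * Cu') * (Mp⁻¹ * B') := by
      simp only [Matrix.sub_mul, Matrix.mul_sub, Matrix.one_mul, Matrix.mul_assoc]
    rw [e1, hres, e2, e3]
    abel
  -- conclude
  have hTT : T * T⁻¹ = 1 := Matrix.mul_nonsing_inv _ hTdet
  have goalRHS : (Cy * (1 - B * (Cu * B)⁻¹ * Cu)).map Complex.ofReal * Mp⁻¹ *
        (A * B * (Cu * B)⁻¹).map Complex.ofReal + (Cy * B * (Cu * B)⁻¹).map Complex.ofReal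
      = Cy' * Y := by
    simp only [mapMul, mapSub, mapOne, hLmap, ← hA', ← hB', ← hCu', ← hCy', hYdef]
    simp only [Matrix.mul_add, Matrix.mul_assoc]
  rw [goalRHS]
  calc Cy' * M⁻¹ * B' * T⁻¹ = Cy' * ((M⁻¹ * B') * T⁻¹) := by simp only [Matrix.mul_assoc]
    _ = Cy' * ((Y * T) * T⁻¹) := by rw [hYT]
    _ = Cy' * (Y * (T * T⁻¹)) := by rw [Matrix.mul_assoc]
    _ = Cy' * Y := by rw [hTT, Matrix.mul_one]
end

section
/- Let $u : \mathbb{N} \to \mathbb{R}^{m}$ and define the cycled signal $\check{u} : \mathbb{N} \to \mathbb{R}^{Mm}$ whose $j$-th sub-vector ($j = 0,\dots,M-1$) at time $k$ equals $u(k)$ if $j = k \bmod M$ and $0$ otherwise. Let $(A_k, B_k, C_k, D_k)$ be an $M$-periodic system with state recursion $x(k+1) = A_k x(k) + B_k u(k)$, $y(k) = C_k x(k) + D_k u(k)$, $x(0) = x_0$, and let $(\check{A}, \check{B}, \check{C}, \check{D})$ be its cyclic reformulation with cycled state recursion $\check{x}(k+1) = \check{A}\check{x}(k) + \check{B}\check{u}(k)$,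 $\check{y}(k) = \check{C}\check{x}(k) + \check{D}\check{u}(k)$, initialized with $\check{x}(0)$ having sub-vector $x_0$ in position $0$ and zeros elsewhere. Then for all $k$, the $(k \bmod M)$-th sub-vector of $\check{x}(k)$ equals $x(k)$, all other sub-vectors of $\check{x}(k)$ are zero, and the $(k \bmod M)$-th sub-vector of $\check{y}(k)$ equals $y(k)$ with all other sub-vectors zero. -/
open Matrix
open Fin.NatCast

/-- Block-cyclic matrix with blocks indexed by arbitrary types:
block `X k` sits in block row `k+1` (mod `M`), block column `k`. -/
def blockCyc {M : ℕ} [NeZero M] {α β : Type*} (X : Fin M → Matrix α β ℝ) :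
    Matrix (Fin M × α) (Fin M × β) ℝ :=
  fun p q => if p.1 = q.1 + 1 then X q.1 p.2 q.2 else 0

/-- Block-diagonal matrix built from `M` blocks. -/
def blockDiagM {M : ℕ} {α β : Type*} (X : Fin M → Matrix α β ℝ) :
    Matrix (Fin M × α) (Fin M × β) ℝ :=
  fun a b => if a.1 = b.1 then X a.1 a.2 b.2 else 0

lemma blockCyc_mulVec {M n m : ℕ} [NeZero M] (A : Fin M → Matrix (Fin n) (Fin m) ℝ)
    (v : Fin M × Fin m → ℝ) (w : Fin m → ℝ) (c : Fin M)
    (hv : ∀ q, v q = if q.1 = c then w q.2 else 0) (q : Fin M × Fin n) :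
    (blockCyc A).mulVec v q = if q.1 = c + 1 then (A c).mulVec w q.2 else 0 := by
  simp only [mulVec, dotProduct, blockCyc, Fintype.sum_prod_type]
  rw [Finset.sum_eq_single c]
  · simp only [hv]
    split_ifs with h
    · simp [mulVec, dotProduct]
    · simp [h]
  · intro b _ hb
    simp only [hv]
    apply Finset.sum_eq_zero
    intro i _
    simp [hb]
  · simp

lemma blockDiagM_mulVec {M n m : ℕ} (A : Fin M → Matrix (Fin n) (Fin m) ℝ)
    (v : Fin M × Fin m → ℝ) (w : Fin m → ℝ) (c : Fin M)
    (hv : ∀ q, v q = if q.1 = c then w q.2 else 0) (q : Fin M × Fin n) :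
    (blockDiagM A).mulVec v q = if q.1 = c then (A c).mulVec w q.2 else 0 := by
  simp only [mulVec, dotProduct, blockDiagM, Fintype.sum_prod_type]
  rw [Finset.sum_eq_single c]
  · simp only [hv]
    split_ifs with h
    · subst h; simp [mulVec, dotProduct]
    · simp [h]
  · intro b _ hb
    simp only [hv]
    apply Finset.sum_eq_zero
    intro i _
    simp [hb]
  · simp

theorem stmt17 {M n m p : ℕ} [NeZero M]
    (A : Fin M → Matrix (Fin n) (Fin n) ℝ) (B : Fin M → Matrix (Fin n) (Fin m) ℝ)
    (C : Fin M → Matrix (Fin p) (Fin n) ℝ) (D : Fin M → Matrix (Fin p) (Fin m) ℝ)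
    (u : ℕ → Fin m → ℝ) (x0 : Fin n → ℝ)
    (x : ℕ → Fin n → ℝ) (y : ℕ → Fin p → ℝ)
    (X : ℕ → Fin M × Fin n → ℝ) (Y : ℕ → Fin M × Fin p → ℝ)
    (uch : ℕ → Fin M × Fin m → ℝ)
    (huch : ∀ (k : ℕ) (q : Fin M × Fin m),
      uch k q = if q.1 = (k : Fin M) then u k q.2 else 0)
    (hx0 : x 0 = x0)
    (hx : ∀ k : ℕ, x (k + 1) = (A (k : Fin M)).mulVec (x k) + (B (k : Fin M)).mulVec (u k))
    (hy : ∀ k : ℕ, y k = (C (k : Fin M)).mulVec (x k) + (D (k : Fin M)).mulVec (u k))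
    (hX0 : ∀ q : Fin M × Fin n, X 0 q = if q.1 = 0 then x0 q.2 else 0)
    (hX : ∀ k : ℕ, X (k + 1) = (blockCyc A).mulVec (X k) + (blockCyc B).mulVec (uch k))
    (hY : ∀ k : ℕ, Y k = (blockDiagM C).mulVec (X k) + (blockDiagM D).mulVec (uch k)) :
    ∀ k : ℕ,
      (∀ q : Fin M × Fin n, X k q = if q.1 = (k : Fin M) then x k q.2 else 0) ∧
      (∀ q : Fin M × Fin p, Y k q = if q.1 = (k : Fin M) then y k q.2 else 0) := by
  have key : ∀ k : ℕ, ∀ q : Fin M × Fin n,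
      X k q = if q.1 = (k : Fin M) then x k q.2 else 0 := by
    intro k
    induction k with
    | zero => intro q; simpa [hx0] using hX0 q
    | succ k ih =>
      intro q
      rw [hX k]
      have h1 := blockCyc_mulVec A (X k) (x k) (k : Fin M) ih q
      have h2 := blockCyc_mulVec B (uch k) (u k) (k : Fin M) (huch k) q
      simp only [Pi.add_apply, h1, h2, hx k]
      push_cast
      split_ifs <;> simp
  intro k
  refine ⟨key k, fun q => ?_⟩
  rw [hY k]
  have h1 := blockDiagM_mulVec C (X k) (x k) (k : Fin M) (key k) q
  have h2 := blockDiagM_mulVec D (uch k) (u k) (k : Fin M) (huch k) q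
  simp only [Pi.add_apply, h1, h2, hy k]
  split_ifs <;> simp
end
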